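/- Let u_l ∈ ℝ^{2^l} be defined by u_{l,j} = 1/4 + (1/2)·φ(j), where for j = ∑ j_i 2^i with j_i ∈ {0,1}, φ(j) ≡ l − |j| (mod 2) counts the parity of the complement weight of j. Then for every subset S ⊆ {0,...,l−1}, ∑_{j : j_i = 1 for all i ∈ S} u_{l,j} = 2^{l−1−|S|} when S ⊊ {0,...,l−1}, while for S = {0,...,l−1} the sum equals u_{l, 2^l−1} = 1/4. -/

import Mathlib

open Finset



lemma sum_range_two_pow (n : ℕ) : ∑ i ∈ range n, 2 ^ i = 2 ^ n - 1 := by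
  induction n with
  | zero => simp
  | succ n ih =>
    rw [Finset.sum_range_succ, ih]
    have : 1 ≤ 2 ^ n := Nat.one_le_two_pow
    omega

lemma sum_two_pow_lt {l : ℕ} {U : Finset ℕ} (hU : U ⊆ range l) :
    ∑ i ∈ U, 2 ^ i < 2 ^ l := by
  calc ∑ i ∈ U, 2 ^ i ≤ ∑ i ∈ range l, 2 ^ i :=
        Finset.sum_le_sum_of_subset hU
    _ = 2 ^ l - 1 := sum_range_two_pow l
    _ < 2 ^ l := by have : 1 ≤ 2 ^ l := Nat.one_le_two_pow; omega

lemma testBit_sum_two_pow (U : Finset ℕ) :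
    ∀ k, (∑ i ∈ U, 2 ^ i).testBit k = decide (k ∈ U) := by
  induction U using Finset.induction_on_max with
  | empty => simp
  | insert a s ha ih =>
    intro k
    have hane : a ∉ s := fun h => absurd (ha a h) (lt_irrefl a)
    have hs_lt : ∑ i ∈ s, 2 ^ i < 2 ^ a :=
      sum_two_pow_lt (fun x hx => Finset.mem_range.2 (ha x hx))
    rw [Finset.sum_insert hane]
    rcases lt_trichotomy k a with h | h | h
    · rw [Nat.testBit_two_pow_add_gt h, ih]
      simp [Finset.mem_insert, h.ne]
    · subst h
      rw [Nat.testBit_two_pow_add_eq, Nat.testBit_lt_two_pow hs_lt]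
      simp
    · have hlt : 2 ^ a + ∑ i ∈ s, 2 ^ i < 2 ^ k := by
        calc 2 ^ a + ∑ i ∈ s, 2 ^ i < 2 ^ a + 2 ^ a := by omega
          _ = 2 ^ (a + 1) := by ring
          _ ≤ 2 ^ k := Nat.pow_le_pow_right (by norm_num) h
      rw [Nat.testBit_lt_two_pow hlt]
      have : k ∉ insert a s := by
        simp only [Finset.mem_insert]
        rintro (rfl | hk)
        · exact lt_irrefl _ h
        · exact absurd (ha k hk) (not_lt.2 h.le)
      simp [this]

lemma neg_one_pow_sub {w m : ℕ} (h : w ≤ m) :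
    (-1 : ℝ) ^ (m - w) = (-1) ^ m * (-1) ^ w := by
  have h2 : (-1 : ℝ) ^ w * (-1) ^ w = 1 := by
    rw [← pow_add]; exact Even.neg_one_pow ⟨w, rfl⟩
  conv_rhs => rw [← Nat.sub_add_cancel h, pow_add]
  rw [mul_assoc, h2, mul_one]

lemma cast_mod_two (k : ℕ) : ((k % 2 : ℕ) : ℝ) = (1 - (-1 : ℝ) ^ k) / 2 := by
  rcases Nat.even_or_odd k with h | h
  · rw [Nat.even_iff.mp h, h.neg_one_pow]; norm_num
  · rw [Nat.odd_iff.mp h, h.neg_one_pow]; norm_num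

lemma eval_sum (C : Finset ℕ) :
    ∑ T ∈ C.powerset, (1 / 4 + 1 / 2 * (((C.card - T.card) % 2 : ℕ) : ℝ))
      = 2 ^ C.card / 2 - (-1 : ℝ) ^ C.card / 4 * (if C = ∅ then 1 else 0) := by
  have step1 : ∀ T ∈ C.powerset,
      (1 / 4 + 1 / 2 * (((C.card - T.card) % 2 : ℕ) : ℝ))
        = 1 / 2 - (-1 : ℝ) ^ C.card / 4 * (-1) ^ T.card := by
    intro T hT
    have hle : T.card ≤ C.card := Finset.card_le_card (Finset.mem_powerset.1 hT)
    rw [cast_mod_two, neg_one_pow_sub hle]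
    ring
  rw [Finset.sum_congr rfl step1, Finset.sum_sub_distrib, ← Finset.mul_sum,
    Finset.sum_const, Finset.card_powerset]
  have : ∑ T ∈ C.powerset, (-1 : ℝ) ^ T.card
      = ((∑ T ∈ C.powerset, (-1 : ℤ) ^ T.card : ℤ) : ℝ) := by push_cast; rfl
  rw [this, Finset.sum_powerset_neg_one_pow_card]
  rcases eq_or_ne C (∅ : Finset ℕ) with h | h <;> simp [h] <;> ring


/-- Number of ones among the first `l` binary digits of `j`. -/
def bitWeight (l j : ℕ) : ℕ :=
  ((Finset.range l).filter fun i => j.testBit i).card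

/-- The real vector `u_l ∈ ℝ^{2^l}`: `u_{l,j} = 1/4 + (1/2)·φ(j)`, where
`φ(j) = (l − |j|) mod 2` is the parity of the complement weight of `j`. -/
noncomputable def uvec (l j : ℕ) : ℝ :=
  1 / 4 + 1 / 2 * (((l - bitWeight l j) % 2 : ℕ) : ℝ)


lemma reindex (l : ℕ) (S : Finset ℕ) (hS : S ⊆ Finset.range l) :
    ∑ j ∈ (Finset.range (2 ^ l)).filter (fun j => ∀ i ∈ S, j.testBit i), uvec l j
      = ∑ T ∈ (Finset.range l \ S).powerset,
          (1 / 4 + 1 / 2 * ((((Finset.range l \ S).card - T.card) % 2 : ℕ) : ℝ)) := by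
  refine Finset.sum_nbij' (i := fun j => ((Finset.range l).filter (fun i => j.testBit i)) \ S)
    (j := fun T => ∑ i ∈ S ∪ T, 2 ^ i) ?_ ?_ ?_ ?_ ?_
  · intro j hj
    simp only [Finset.mem_filter, Finset.mem_range] at hj
    exact Finset.mem_powerset.2 (Finset.sdiff_subset_sdiff (Finset.filter_subset _ _) le_rfl)
  · intro T hT
    have hT' : T ⊆ Finset.range l \ S := Finset.mem_powerset.1 hT
    have hsub : S ∪ T ⊆ Finset.range l :=
      Finset.union_subset hS (hT'.trans Finset.sdiff_subset)
    simp only [Finset.mem_filter, Finset.mem_range]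
    refine ⟨sum_two_pow_lt hsub, fun i hi => ?_⟩
    rw [testBit_sum_two_pow]
    simp [Finset.mem_union, hi]
  · intro j hj
    simp only [Finset.mem_filter, Finset.mem_range] at hj
    obtain ⟨hjlt, hjbits⟩ := hj
    have hSsub : S ⊆ (Finset.range l).filter (fun i => j.testBit i) := by
      intro i hi
      exact Finset.mem_filter.2 ⟨hS hi, hjbits i hi⟩
    show ∑ i ∈ S ∪ (((Finset.range l).filter (fun i => j.testBit i)) \ S), 2 ^ i = j
    rw [Finset.union_sdiff_of_subset hSsub]
    apply Nat.eq_of_testBit_eq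
    intro k
    rw [testBit_sum_two_pow]
    by_cases hk : k < l
    · simp [Finset.mem_filter, Finset.mem_range, hk]
    · have : j < 2 ^ k := hjlt.trans_le (Nat.pow_le_pow_right (by norm_num) (not_lt.1 hk))
      rw [Nat.testBit_lt_two_pow this]
      simp [Finset.mem_filter, Finset.mem_range, hk]
  · intro T hT
    have hT' : T ⊆ Finset.range l \ S := Finset.mem_powerset.1 hT
    ext k
    simp only [Finset.mem_sdiff, Finset.mem_filter, Finset.mem_range, testBit_sum_two_pow,
      decide_eq_true_eq, Finset.mem_union]
    constructor
    · rintro ⟨⟨hk, (hkS | hkT)⟩, hknS⟩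
      · exact absurd hkS hknS
      · exact hkT
    · intro hkT
      have := hT' hkT
      simp only [Finset.mem_sdiff, Finset.mem_range] at this
      exact ⟨⟨this.1, Or.inr hkT⟩, this.2⟩
  · intro j hj
    simp only [Finset.mem_filter, Finset.mem_range] at hj
    obtain ⟨hjlt, hjbits⟩ := hj
    have hSsub : S ⊆ (Finset.range l).filter (fun i => j.testBit i) := by
      intro i hi
      exact Finset.mem_filter.2 ⟨hS hi, hjbits i hi⟩
    have h1 : (((Finset.range l).filter (fun i => j.testBit i)) \ S).card + S.card
        = ((Finset.range l).filter (fun i => j.testBit i)).card :=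
      Finset.card_sdiff_add_card_eq_card hSsub
    have h2 : (Finset.range l \ S).card + S.card = l := by
      have := Finset.card_sdiff_add_card_eq_card hS
      simpa using this
    have h3 : ((Finset.range l).filter (fun i => j.testBit i)).card ≤ l := by
      simpa using Finset.card_le_card (Finset.filter_subset _ (Finset.range l))
    have hcardeq : l - bitWeight l j
        = (Finset.range l \ S).card - (((Finset.range l).filter (fun i => j.testBit i)) \ S).card := by
      have hb : bitWeight l j = ((Finset.range l).filter (fun i => j.testBit i)).card := rfl
      omega
    show uvec l j = 1 / 4 + 1 / 2 * ((((Finset.range l \ S).card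
        - (((Finset.range l).filter (fun i => j.testBit i)) \ S).card) % 2 : ℕ) : ℝ)
    rw [uvec, hcardeq]

lemma key (l : ℕ) (S : Finset ℕ) (hS : S ⊆ Finset.range l) :
    ∑ j ∈ (Finset.range (2 ^ l)).filter (fun j => ∀ i ∈ S, j.testBit i), uvec l j
      = 2 ^ (l - S.card) / 2
        - (-1 : ℝ) ^ (l - S.card) / 4 * (if S = Finset.range l then 1 else 0) := by
  rw [reindex l S hS, eval_sum]
  have h2 : (Finset.range l \ S).card = l - S.card := by
    rw [Finset.card_sdiff_of_subset hS, Finset.card_range]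
  rw [h2]
  congr 1
  congr 1
  by_cases h : S = Finset.range l
  · simp [h, Finset.sdiff_self]
  · have hne : Finset.range l \ S ≠ ∅ := by
      intro he
      apply h
      have h2' := Finset.card_sdiff_add_card_eq_card hS
      rw [he] at h2'
      simp only [Finset.card_empty, zero_add] at h2'
      exact Finset.eq_of_subset_of_card_le hS (le_of_eq h2'.symm)
    simp [h, hne]

/-- Key counting lemma: for `S ⊆ {0,…,l−1}`, the sum of `u_{l,j}` over those `j`
whose `i`-th bit is `1` for all `i ∈ S` equals `2^{l−1−|S|}` when `S` is proper,
and equals `u_{l,2^l−1} = 1/4` when `S = {0,…,l−1}`. -/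
theorem uvec_partial_sums (l : ℕ) (hl : 1 ≤ l) (S : Finset ℕ)
    (hS : S ⊆ Finset.range l) :
    (S ≠ Finset.range l →
      ∑ j ∈ (Finset.range (2 ^ l)).filter (fun j => ∀ i ∈ S, j.testBit i),
        uvec l j = 2 ^ (l - 1 - S.card)) ∧
    (S = Finset.range l →
      ∑ j ∈ (Finset.range (2 ^ l)).filter (fun j => ∀ i ∈ S, j.testBit i),
        uvec l j = 1 / 4) := by
  constructor
  · intro hne
    rw [key l S hS]
    have hcard : S.card < l := by
      have h1 : S.card ≤ l := by simpa using Finset.card_le_card hS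
      rcases lt_or_eq_of_le h1 with h | h
      · exact h
      · exact absurd (Finset.eq_of_subset_of_card_le hS (by simp [h])) hne
    have hpow : l - S.card = (l - 1 - S.card) + 1 := by omega
    rw [if_neg hne, hpow, pow_succ]
    ring
  · intro heq
    rw [key l S hS, if_pos heq, heq, Finset.card_range]
    norm_num
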